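/- arXiv:2507.21457 — 5 statements merged into one kernel-verified Lean document; each statement's English description precedes it below -/
import Mathlib

section
/- For any real number ρ > 1 there exists a constant C(ρ) > 0 such that for all nonnegative reals x₁, …, xₙ, one has log^ρ(1 + Σᵢ xᵢ) ≤ Σᵢ log^ρ(1 + xᵢ) + C(ρ) · log^ρ(n). -/
open Real Finset

private lemma rpow_le_add_mul_sub (ρ : ℝ) (hρ : 1 ≤ ρ) {u v : ℝ} (hu : 0 ≤ u) (huv : u ≤ v) :
    v ^ ρ ≤ u ^ ρ + ρ * v ^ (ρ - 1) * (v - u) := by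
  rcases eq_or_lt_of_le (hu.trans huv) with hv | hv
  · have : u = 0 := le_antisymm (huv.trans hv.symm.le) hu
    simp [← hv, this]
  have hs : -1 ≤ u / v - 1 := by
    have : 0 ≤ u / v := div_nonneg hu hv.le
    linarith
  have hB := one_add_mul_self_le_rpow_one_add hs hρ
  have h1 : 1 + (u / v - 1) = u / v := by ring
  rw [h1] at hB
  have h2 : (u / v) ^ ρ = u ^ ρ / v ^ ρ := Real.div_rpow hu hv.le ρ
  rw [h2] at hB
  have hvρ : 0 < v ^ ρ := Real.rpow_pos_of_pos hv ρ
  have key : (1 + ρ * (u / v - 1)) * v ^ ρ ≤ u ^ ρ := by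
    calc (1 + ρ * (u / v - 1)) * v ^ ρ ≤ (u ^ ρ / v ^ ρ) * v ^ ρ :=
          mul_le_mul_of_nonneg_right hB hvρ.le
      _ = u ^ ρ := div_mul_cancel₀ _ hvρ.ne'
  have hvv : v ^ ρ = v ^ (ρ - 1) * v := by
    rw [← Real.rpow_add_one hv.ne' (ρ - 1)]; ring_nf
  have hdiv : v ^ ρ * (u / v) = v ^ (ρ - 1) * u := by
    rw [hvv]; field_simp
  nlinarith [key, hvv, hdiv]

set_option maxHeartbeats 1000000 in
private lemma quasi_aux (ρ : ℝ) (hρ : 1 < ρ) (n : ℕ) (hn : 2 ≤ n) (x : Fin n → ℝ)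
    (hx : ∀ i, 0 ≤ x i) :
    Real.log (1 + ∑ i, x i) ^ ρ ≤
      (∑ i, Real.log (1 + x i) ^ ρ) +
        (((256 * (ρ - 1) ^ 2 + 8 * (Real.log 2 + Real.log ρ + ρ) + 2 * ρ * (8 : ℝ) ^ ρ)
            / Real.log 2 + 8) ^ ρ + 1) * Real.log n ^ ρ := by
  have hρ0 : (0:ℝ) < ρ := by linarith
  have hlog2 : (0:ℝ) < Real.log 2 := Real.log_pos (by norm_num)
  have hlogρ : 0 ≤ Real.log ρ := Real.log_nonneg hρ.le
  have h8ρ : (0:ℝ) < (8:ℝ) ^ ρ := Real.rpow_pos_of_pos (by norm_num) ρ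
  have hNnn : 0 ≤ 256 * (ρ-1)^2 + 8 * (Real.log 2 + Real.log ρ + ρ) + 2*ρ*(8:ℝ)^ρ := by
    linarith only [sq_nonneg (ρ-1), mul_pos hρ0 h8ρ, hlog2, hlogρ, hρ0]
  set K := (256 * (ρ - 1) ^ 2 + 8 * (Real.log 2 + Real.log ρ + ρ) + 2 * ρ * (8 : ℝ) ^ ρ)
      / Real.log 2 + 8 with hKdef
  have hK8 : (8:ℝ) ≤ K := by
    have : 0 ≤ (256 * (ρ-1)^2 + 8 * (Real.log 2 + Real.log ρ + ρ) + 2*ρ*(8:ℝ)^ρ) / Real.log 2 :=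
      div_nonneg hNnn hlog2.le
    rw [hKdef]; linarith
  have hKlog : 256 * (ρ-1)^2 + 8 * (Real.log 2 + Real.log ρ + ρ) + 2*ρ*(8:ℝ)^ρ
      ≤ K * Real.log 2 := by
    rw [hKdef, add_mul, div_mul_cancel₀ _ hlog2.ne']
    linarith only [hlog2]
  have hKρ0 : 0 ≤ K ^ ρ := Real.rpow_nonneg (by linarith) ρ
  set S := ∑ i, x i with hSdef
  have hS : 0 ≤ S := Finset.sum_nonneg fun i _ => hx i
  set a : Fin n → ℝ := fun i => Real.log (1 + x i) with hadef
  have hgoalrw : (∑ i, Real.log (1 + x i) ^ ρ) = ∑ i, a i ^ ρ := by simp [hadef]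
  rw [hgoalrw]
  have ha0 : ∀ i, 0 ≤ a i := fun i => Real.log_nonneg (by linarith [hx i])
  set L := Real.log (1 + S) with hLdef
  have hL0 : 0 ≤ L := Real.log_nonneg (by linarith)
  set ℓ := Real.log n with hldef
  have hn' : (2:ℝ) ≤ (n:ℝ) := by exact_mod_cast hn
  have hℓ : Real.log 2 ≤ ℓ := Real.log_le_log (by norm_num) hn'
  have hℓ0 : 0 < ℓ := lt_of_lt_of_le hlog2 hℓ
  have hn0 : (0:ℝ) < (n:ℝ) := by linarith
  have hsumnn : 0 ≤ ∑ i, a i ^ ρ := Finset.sum_nonneg fun i _ => Real.rpow_nonneg (ha0 i) ρ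
  have hℓρ0 : 0 ≤ ℓ ^ ρ := Real.rpow_nonneg hℓ0.le ρ
  have : Nonempty (Fin n) := ⟨⟨0, by omega⟩⟩
  obtain ⟨i₀, hi₀⟩ := Finite.exists_max a
  set A := a i₀ with hAdef
  have hA0 : 0 ≤ A := ha0 i₀
  have hxmax : ∀ i, x i ≤ x i₀ := by
    intro i
    have h0 := hi₀ i
    have h1 : (0:ℝ) < 1 + x i := by linarith [hx i]
    have h2 : (0:ℝ) < 1 + x i₀ := by linarith [hx i₀]
    have h3 : Real.log (1 + x i) ≤ Real.log (1 + x i₀) := h0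
    have := (Real.log_le_log_iff h1 h2).mp h3
    linarith
  have hLA : L ≤ A + ℓ := by
    have h1 : S ≤ n * x i₀ := by
      calc S = ∑ i, x i := hSdef
        _ ≤ ∑ _i : Fin n, x i₀ := Finset.sum_le_sum (fun i _ => hxmax i)
        _ = n * x i₀ := by simp [Finset.sum_const, Finset.card_univ, nsmul_eq_mul]
    have h2 : 1 + S ≤ (n:ℝ) * (1 + x i₀) := by linarith only [h1, hn']
    have h3 : L ≤ Real.log ((n:ℝ) * (1 + x i₀)) := Real.log_le_log (by linarith) h2
    rw [Real.log_mul hn0.ne' (by linarith [hx i₀] : (1:ℝ) + x i₀ ≠ 0)] at h3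
    have hAe : A = Real.log (1 + x i₀) := hAdef
    rw [hldef]; linarith [h3]
  rcases le_or_gt L (K * ℓ) with hcase | hcase
  · -- Case I : L small
    have h1 : L ^ ρ ≤ (K * ℓ) ^ ρ := Real.rpow_le_rpow hL0 hcase hρ0.le
    have h2 : (K * ℓ) ^ ρ = K ^ ρ * ℓ ^ ρ := Real.mul_rpow (by linarith) hℓ0.le
    linarith only [h1, h2, hsumnn, hℓρ0, mul_nonneg hKρ0 hℓρ0]
  -- Case II
  have hLpos : 0 < L := lt_trans (mul_pos (by linarith : (0:ℝ) < K) hℓ0) hcase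
  have hLK2 : K * Real.log 2 ≤ L :=
    le_trans (mul_le_mul_of_nonneg_left hℓ (by linarith : (0:ℝ) ≤ K)) hcase.le
  have hLN : 256 * (ρ-1)^2 + 8 * (Real.log 2 + Real.log ρ + ρ) + 2*ρ*(8:ℝ)^ρ ≤ L :=
    le_trans hKlog hLK2
  have hℓL8 : ℓ ≤ L / 8 := by
    have h8 : 8 * ℓ ≤ K * ℓ := mul_le_mul_of_nonneg_right hK8 hℓ0.le
    linarith
  rcases le_or_gt L A with hLA2 | hLA2
  · have h1 : L ^ ρ ≤ A ^ ρ := Real.rpow_le_rpow hL0 hLA2 hρ0.le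
    have h2 : A ^ ρ ≤ ∑ i, a i ^ ρ :=
      Finset.single_le_sum (fun i _ => Real.rpow_nonneg (ha0 i) ρ) (Finset.mem_univ i₀)
    linarith only [h1, h2, hℓρ0, mul_nonneg hKρ0 hℓρ0]
  set D := L - A with hDdef
  have hD0 : 0 < D := by rw [hDdef]; linarith
  have hDℓ : D ≤ ℓ := by rw [hDdef]; linarith
  have hconv : L ^ ρ ≤ A ^ ρ + ρ * L ^ (ρ-1) * D := by
    have := rpow_le_add_mul_sub ρ hρ.le hA0 hLA2.le
    rw [hDdef]; exact this
  have hLρ1 : 0 < L ^ (ρ-1) := Real.rpow_pos_of_pos hLpos _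
  have hP0 : 0 < ρ * L ^ (ρ-1) := mul_pos hρ0 hLρ1
  have hAsum : A ^ ρ ≤ ∑ i, a i ^ ρ :=
    Finset.single_le_sum (fun i _ => Real.rpow_nonneg (ha0 i) ρ) (Finset.mem_univ i₀)
  rcases le_or_gt (ρ * L ^ (ρ-1) * D) (ℓ ^ ρ) with hcase2 | hcase2
  · linarith only [hconv, hcase2, hAsum, hℓρ0, mul_nonneg hKρ0 hℓρ0]
  -- Case II.b : counting
  have hlogD : ρ * Real.log ℓ - Real.log ρ - (ρ-1) * Real.log L ≤ Real.log D := by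
    have h1 : ℓ ^ ρ / (ρ * L ^ (ρ-1)) < D := (div_lt_iff₀ hP0).mpr (by linarith)
    have h2 : Real.log (ℓ ^ ρ / (ρ * L ^ (ρ-1))) ≤ Real.log D :=
      Real.log_le_log (div_pos (Real.rpow_pos_of_pos hℓ0 ρ) hP0) h1.le
    rw [Real.log_div (by positivity) hP0.ne', Real.log_rpow hℓ0,
      Real.log_mul hρ0.ne' hLρ1.ne', Real.log_rpow hLpos] at h2
    linarith
  have hloglb : -1 ≤ Real.log ℓ := by
    have hexpinv : Real.exp (-1) * Real.exp 1 = 1 := by rw [← Real.exp_add]; norm_num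
    have h1 : Real.exp (-1) ≤ 0.37 := by
      have hp : 0 < Real.exp (-1) * (Real.exp 1 - 2.7182818283) :=
        mul_pos (Real.exp_pos (-1))
          (by linarith only [Real.exp_one_gt_d9] : (0:ℝ) < Real.exp 1 - 2.7182818283)
      nlinarith [hp, hexpinv]
    have h2 : Real.exp (-1) ≤ ℓ := by
      have := Real.log_two_gt_d9
      linarith
    calc (-1:ℝ) = Real.log (Real.exp (-1)) := (Real.log_exp _).symm
      _ ≤ Real.log ℓ := Real.log_le_log (Real.exp_pos _) h2
  have hsqrtL : Real.log L ≤ 2 * Real.sqrt L := by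
    have h1 : Real.log (Real.sqrt L) ≤ Real.sqrt L - 1 :=
      Real.log_le_sub_one_of_pos (Real.sqrt_pos.mpr hLpos)
    have h2 : Real.log (Real.sqrt L) = Real.log L / 2 := Real.log_sqrt hL0
    linarith [Real.sqrt_nonneg L]
  have hρ1sq : 2 * (ρ-1) * Real.sqrt L ≤ L / 8 := by
    have h1 : 256 * (ρ-1)^2 ≤ L := by
      linarith only [hLN, hlog2, hlogρ, hρ0, mul_pos hρ0 h8ρ]
    have h2 : 16 * (ρ-1) ≤ Real.sqrt L := by
      have h4 : Real.sqrt (256 * (ρ-1)^2) ≤ Real.sqrt L := Real.sqrt_le_sqrt h1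
      have h3 : Real.sqrt (256 * (ρ-1)^2) = 16 * (ρ-1) := by
        rw [show 256 * (ρ-1)^2 = (16 * (ρ-1))^2 by ring, Real.sqrt_sq (by linarith)]
      linarith
    have h4 : Real.sqrt L * Real.sqrt L = L := Real.mul_self_sqrt hL0
    have hp : 0 ≤ (Real.sqrt L - 16 * (ρ-1)) * Real.sqrt L :=
      mul_nonneg (by linarith only [h2]) (Real.sqrt_nonneg L)
    nlinarith [hp, h4]
  have hconst : Real.log 2 + Real.log ρ + ρ ≤ L / 8 := by
    linarith only [hLN, sq_nonneg (ρ-1), mul_pos hρ0 h8ρ]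
  set r := Real.log 2 + ℓ - Real.log D with hrdef
  have e1 : (ρ-1) * Real.log L ≤ (ρ-1) * (2 * Real.sqrt L) :=
    mul_le_mul_of_nonneg_left hsqrtL (by linarith)
  have e2 : -(ρ * Real.log ℓ) ≤ ρ := by
    have hp : 0 ≤ ρ * (Real.log ℓ + 1) :=
      mul_nonneg hρ0.le (by linarith only [hloglb])
    linarith only [hp]
  have hr38 : r ≤ 3 * L / 8 := by
    rw [hrdef]; linarith only [hlogD, e1, e2, hℓL8, hconst, hρ1sq]
  have hA2 : L / 2 ≤ A := by
    have : A = L - D := by rw [hDdef]; ring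
    rw [this]; linarith
  set β := A - r with hβdef
  have hβ8 : L / 8 ≤ β := by rw [hβdef]; linarith
  have hβ0 : 0 ≤ β := by linarith [hLpos]
  have hr0 : 0 ≤ r := by
    have h1 : Real.log D ≤ Real.log ℓ := Real.log_le_log hD0 hDℓ
    have h2 : Real.log ℓ ≤ ℓ - 1 := Real.log_le_sub_one_of_pos hℓ0
    rw [hrdef]; linarith
  set F := Finset.univ.filter (fun i => β ≤ a i) with hFdef
  have hi₀F : i₀ ∈ F := Finset.mem_filter.mpr ⟨Finset.mem_univ _, by rw [hβdef]; linarith⟩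
  have hexpa : ∀ i, Real.exp (a i) = 1 + x i := fun i => Real.exp_log (by linarith [hx i])
  have hexpL : Real.exp L = 1 + S := Real.exp_log (by linarith)
  have hsum_exp : Real.exp L ≤ ∑ i, Real.exp (a i) := by
    have hone : ∑ _i : Fin n, (1:ℝ) = n := by simp
    have h1 : ∑ i, Real.exp (a i) = n + S := by
      simp only [hexpa]
      rw [Finset.sum_add_distrib, hone, hSdef]
    rw [hexpL, h1]; linarith
  have hsplit : ∑ i, Real.exp (a i) =
      (∑ i ∈ F, Real.exp (a i)) +
        ∑ i ∈ Finset.univ.filter (fun i => ¬ β ≤ a i), Real.exp (a i) :=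
    (Finset.sum_filter_add_sum_filter_not _ _ _).symm
  have hexpβn : (n:ℝ) * Real.exp β = Real.exp A * D / 2 := by
    have h1 : Real.exp β = Real.exp A * D / (2 * n) := by
      rw [hβdef, hrdef, show A - (Real.log 2 + ℓ - Real.log D)
          = A + Real.log D - Real.log 2 - ℓ by ring]
      rw [Real.exp_sub, Real.exp_sub, Real.exp_add, Real.exp_log hD0,
        Real.exp_log (by norm_num : (0:ℝ) < 2), hldef, Real.exp_log hn0]
      ring
    rw [h1]; field_simp
  have hFc_bound : ∑ i ∈ Finset.univ.filter (fun i => ¬ β ≤ a i), Real.exp (a i)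
      ≤ Real.exp A * D / 2 := by
    have h1 : ∑ i ∈ Finset.univ.filter (fun i => ¬ β ≤ a i), Real.exp (a i)
        ≤ (Finset.univ.filter (fun i => ¬ β ≤ a i)).card • Real.exp β := by
      refine Finset.sum_le_card_nsmul _ _ _ (fun i hi => ?_)
      have h2 := (Finset.mem_filter.mp hi).2
      exact (Real.exp_le_exp.mpr (not_le.mp h2).le)
    have h2 : ((Finset.univ.filter (fun i => ¬ β ≤ a i)).card : ℝ) ≤ n := by
      have := Finset.card_filter_le (Finset.univ : Finset (Fin n)) (fun i => ¬ β ≤ a i)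
      have h3 : (Finset.univ : Finset (Fin n)).card = n := by simp
      exact_mod_cast (h3 ▸ this)
    calc ∑ i ∈ Finset.univ.filter (fun i => ¬ β ≤ a i), Real.exp (a i)
        ≤ ((Finset.univ.filter (fun i => ¬ β ≤ a i)).card : ℝ) * Real.exp β := by
          rw [← nsmul_eq_mul]; exact h1
      _ ≤ (n:ℝ) * Real.exp β := mul_le_mul_of_nonneg_right h2 (Real.exp_pos _).le
      _ = Real.exp A * D / 2 := hexpβn
  have hF_lb : Real.exp A * (1 + D/2) ≤ ∑ i ∈ F, Real.exp (a i) := by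
    have hD1 : 1 + D ≤ Real.exp D := by linarith [Real.add_one_le_exp D]
    have hLAD : Real.exp L = Real.exp A * Real.exp D := by
      rw [← Real.exp_add]; congr 1; rw [hDdef]; ring
    have h1 : Real.exp A * (1 + D) ≤ Real.exp L := by
      rw [hLAD]; exact mul_le_mul_of_nonneg_left hD1 (Real.exp_pos A).le
    clear_value D A L β r ℓ S K
    linarith only [h1, hsum_exp, hsplit, hFc_bound]
  have hcardF : (1 : ℝ) + D/2 ≤ (F.card : ℝ) := by
    have h1 : ∑ i ∈ F, Real.exp (a i) ≤ (F.card : ℝ) * Real.exp A := by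
      have := Finset.sum_le_card_nsmul F (fun i => Real.exp (a i)) (Real.exp A)
        (fun i _ => Real.exp_le_exp.mpr (hi₀ i))
      rw [nsmul_eq_mul] at this; exact this
    have h3 : (1 + D/2) * Real.exp A ≤ (F.card : ℝ) * Real.exp A :=
      le_trans (by linarith only [hF_lb]) h1
    exact (mul_le_mul_iff_of_pos_right (Real.exp_pos A)).mp h3
  have hsum_erase : ((F.erase i₀).card : ℝ) * β ^ ρ ≤ ∑ i ∈ F.erase i₀, a i ^ ρ := by
    have h1 := Finset.card_nsmul_le_sum (F.erase i₀) (fun i => a i ^ ρ) (β ^ ρ)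
      (fun i hi => by
        have hiF := Finset.mem_of_mem_erase hi
        have h2 : β ≤ a i := (Finset.mem_filter.mp hiF).2
        exact Real.rpow_le_rpow hβ0 h2 hρ0.le)
    rw [nsmul_eq_mul] at h1; exact h1
  have hcard_erase : ((F.erase i₀).card : ℝ) = (F.card : ℝ) - 1 := by
    rw [Finset.card_erase_of_mem hi₀F,
      Nat.cast_sub (Finset.one_le_card.mpr ⟨i₀, hi₀F⟩)]
    norm_num
  have hsumF : A ^ ρ + ∑ i ∈ F.erase i₀, a i ^ ρ ≤ ∑ i, a i ^ ρ := by
    have h1 : ∑ i ∈ F.erase i₀, a i ^ ρ + a i₀ ^ ρ = ∑ i ∈ F, a i ^ ρ :=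
      Finset.sum_erase_add F _ hi₀F
    have h2 : ∑ i ∈ F, a i ^ ρ ≤ ∑ i, a i ^ ρ :=
      Finset.sum_le_sum_of_subset_of_nonneg (Finset.filter_subset _ _)
        (fun i _ _ => Real.rpow_nonneg (ha0 i) ρ)
    rw [← hAdef] at h1
    linarith
  have hL2ρ8 : 2 * ρ * (8:ℝ)^ρ ≤ L := by
    linarith only [hLN, sq_nonneg (ρ-1), hlog2, hlogρ, hρ0]
  have hL8ρ : 2 * ρ ≤ L / (8:ℝ)^ρ := by rw [le_div_iff₀ h8ρ]; linarith
  have hLρsplit : (L/8) ^ ρ = L ^ (ρ-1) * (L / (8:ℝ)^ρ) := by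
    rw [Real.div_rpow hL0 (by norm_num : (0:ℝ) ≤ 8),
      show L ^ ρ = L ^ (ρ-1) * L by rw [← Real.rpow_add_one hLpos.ne' (ρ-1)]; ring_nf]
    ring
  have hkey1 : ρ * L ^ (ρ-1) * D ≤ (D/2) * (L/8) ^ ρ := by
    rw [hLρsplit]
    have hprod : 0 ≤ (D/2) * (L ^ (ρ-1)) * (L / (8:ℝ)^ρ - 2*ρ) :=
      mul_nonneg (mul_nonneg (by linarith) hLρ1.le) (by linarith)
    linarith only [hprod]
  have hkey2 : (D/2) * (L/8) ^ ρ ≤ ((F.card:ℝ) - 1) * β ^ ρ := by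
    have h1 : (L/8) ^ ρ ≤ β ^ ρ := Real.rpow_le_rpow (by linarith) hβ8 hρ0.le
    have h2 : 0 ≤ (L/8) ^ ρ := Real.rpow_nonneg (by linarith) ρ
    have h3 : D/2 ≤ (F.card:ℝ) - 1 := by linarith [hcardF]
    exact mul_le_mul h3 h1 h2 (by linarith)
  have hgoal : L ^ ρ ≤ ∑ i, a i ^ ρ := by
    have h1 : ((F.card:ℝ) - 1) * β ^ ρ ≤ ∑ i ∈ F.erase i₀, a i ^ ρ := by
      rw [← hcard_erase]; exact hsum_erase
    clear_value D A L β r ℓ S K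
    linarith only [hconv, hkey1, hkey2, h1, hsumF]
  linarith only [hgoal, hℓρ0, mul_nonneg hKρ0 hℓρ0]

/-- Quasi-metric property of `x ↦ (log (1+x))^ρ` for `ρ > 1`. -/
theorem quasi_metric_log_rpow (ρ : ℝ) (hρ : 1 < ρ) :
    ∃ C : ℝ, 0 < C ∧ ∀ (n : ℕ) (x : Fin n → ℝ), (∀ i, 0 ≤ x i) →
      Real.log (1 + ∑ i, x i) ^ ρ ≤
        (∑ i, Real.log (1 + x i) ^ ρ) + C * Real.log n ^ ρ := by
  have hρ0 : (0:ℝ) < ρ := by linarith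
  have hlog2 : (0:ℝ) < Real.log 2 := Real.log_pos (by norm_num)
  have hlogρ : 0 ≤ Real.log ρ := Real.log_nonneg hρ.le
  have h8ρ : (0:ℝ) < (8:ℝ) ^ ρ := Real.rpow_pos_of_pos (by norm_num) ρ
  have hNnn : 0 ≤ 256 * (ρ-1)^2 + 8 * (Real.log 2 + Real.log ρ + ρ) + 2*ρ*(8:ℝ)^ρ := by
    nlinarith [sq_nonneg (ρ-1), mul_pos hρ0 h8ρ]
  refine ⟨((256 * (ρ - 1) ^ 2 + 8 * (Real.log 2 + Real.log ρ + ρ) + 2 * ρ * (8 : ℝ) ^ ρ)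
      / Real.log 2 + 8) ^ ρ + 1, ?_, ?_⟩
  · have h1 : (0:ℝ) ≤ ((256 * (ρ - 1) ^ 2 + 8 * (Real.log 2 + Real.log ρ + ρ)
        + 2 * ρ * (8 : ℝ) ^ ρ) / Real.log 2 + 8) ^ ρ :=
      Real.rpow_nonneg (by positivity) ρ
    linarith
  · intro n x hx
    match n with
    | 0 => simp [Real.zero_rpow hρ0.ne']
    | 1 => simp [Real.zero_rpow hρ0.ne']
    | (m+2) => exact quasi_aux ρ hρ (m+2) (by omega) x hx
end

section
/- Let ρ > 1 and let x > y > 0 with 1 + x > 2y. Then log^ρ(1 + x − y) ≥ (1 − 2ρ · y / ((1+x) · log(1+x))) · log^ρ(1 + x). -/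
/-- Extract lemma: comparing `log^ρ(1+x−y)` with `log^ρ(1+x)`. -/
theorem extract_lemma (ρ x y : ℝ) (hρ : 1 < ρ) (hyx : y < x) (hy : 0 < y)
    (h2y : 2 * y < 1 + x) :
    (1 - 2 * ρ * y / ((1 + x) * Real.log (1 + x))) * Real.log (1 + x) ^ ρ ≤
      Real.log (1 + x - y) ^ ρ := by
  have hx : 0 < x := hy.trans hyx
  have h1xy : 1 < 1 + x - y := by linarith
  have h1x : 1 < 1 + x := by linarith
  set L := Real.log (1 + x) with hLdef
  set M := Real.log (1 + x - y) with hMdef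
  have hLpos : 0 < L := Real.log_pos h1x
  have hMpos : 0 < M := Real.log_pos h1xy
  have hdiff : L - M ≤ 2 * y / (1 + x) := by
    have h0 : (0:ℝ) < 1 + x - y := by linarith
    have hlog : L - M = Real.log ((1 + x) / (1 + x - y)) := by
      rw [Real.log_div (by linarith) (by linarith)]
    have h2 : Real.log ((1 + x) / (1 + x - y)) ≤ (1 + x) / (1 + x - y) - 1 :=
      Real.log_le_sub_one_of_pos (by positivity)
    have h3 : (1 + x) / (1 + x - y) - 1 = y / (1 + x - y) := by field_simp; ring
    have h4 : y / (1 + x - y) ≤ 2 * y / (1 + x) := by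
      rw [div_le_div_iff₀ h0 (by linarith)]
      nlinarith
    linarith
  have hs : -1 ≤ M / L - 1 := by
    have : 0 ≤ M / L := by positivity
    linarith
  have hbern : 1 + ρ * (M / L - 1) ≤ (1 + (M / L - 1)) ^ ρ :=
    one_add_mul_self_le_rpow_one_add hs hρ.le
  have hML1 : (1 + (M / L - 1)) = M / L := by ring
  rw [hML1] at hbern
  have hkey : 1 - 2 * ρ * y / ((1 + x) * L) ≤ 1 + ρ * (M / L - 1) := by
    have h1 : 1 - M / L = (L - M) / L := by field_simp
    have h2 : ρ * ((L - M) / L) ≤ ρ * ((2 * y / (1 + x)) / L) := by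
      gcongr
    have h3 : ρ * ((2 * y / (1 + x)) / L) = 2 * ρ * y / ((1 + x) * L) := by
      field_simp
    nlinarith [h2, h3]
  have hLrpow : (0:ℝ) < L ^ ρ := Real.rpow_pos_of_pos hLpos ρ
  calc (1 - 2 * ρ * y / ((1 + x) * L)) * L ^ ρ
      ≤ (1 + ρ * (M / L - 1)) * L ^ ρ := by
        apply mul_le_mul_of_nonneg_right hkey hLrpow.le
    _ ≤ (M / L) ^ ρ * L ^ ρ := mul_le_mul_of_nonneg_right hbern hLrpow.le
    _ = M ^ ρ := by
        rw [Real.div_rpow hMpos.le hLpos.le, div_mul_cancel₀]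
        exact ne_of_gt hLrpow
end

section
/- Let M be a block matrix [[A, B],[C, D]] with A invertible and ‖B‖, ‖C‖ ≤ 1, and let S = D − C A⁻¹ B. Then M is invertible if and only if S is invertible, and in that case ‖S⁻¹‖ ≤ ‖M⁻¹‖ < 4(1 + ‖A⁻¹‖)²(1 + ‖S⁻¹‖). -/
open Matrix
open scoped Matrix.Norms.L2Operator

/-- The `ℓ² → ℓ²` operator norm of a (possibly non-square) complex matrix. -/
noncomputable def matrixL2OpNorm {m n : Type*} [Fintype m] [Fintype n]
    [DecidableEq m] [DecidableEq n] (M : Matrix m n ℂ) : ℝ :=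
  ‖LinearMap.toContinuousLinearMap (Matrix.toEuclideanLin M)‖

lemma matrixL2OpNorm_eq {m n : Type*} [Fintype m] [Fintype n]
    [DecidableEq m] [DecidableEq n] (M : Matrix m n ℂ) : matrixL2OpNorm M = ‖M‖ := rfl

lemma aux_norm_one_le (n : Type*) [Fintype n] [DecidableEq n] :
    ‖(1 : Matrix n n ℂ)‖ ≤ 1 := by
  have h := Matrix.l2_opNorm_conjTranspose_mul_self (1 : Matrix n n ℂ)
  rw [conjTranspose_one, mul_one] at h
  nlinarith [norm_nonneg (1 : Matrix n n ℂ)]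

lemma aux_norm_le_one_of_mul_self {p q : Type*} [Fintype p] [Fintype q]
    [DecidableEq p] [DecidableEq q] (J : Matrix p q ℂ) (h : Jᴴ * J = 1) : ‖J‖ ≤ 1 := by
  have h2 := Matrix.l2_opNorm_conjTranspose_mul_self J
  rw [h] at h2
  have h3 := aux_norm_one_le q
  nlinarith [norm_nonneg J]

lemma aux_sandwich {a b c d : Type*} [Fintype a] [Fintype b] [Fintype c] [Fintype d]
    [DecidableEq a] [DecidableEq b] [DecidableEq c] [DecidableEq d]
    (E : Matrix a b ℂ) (X : Matrix b c ℂ) (F : Matrix c d ℂ)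
    (hE : ‖E‖ ≤ 1) (hF : ‖F‖ ≤ 1) : ‖E * X * F‖ ≤ ‖X‖ := by
  have h1 := Matrix.l2_opNorm_mul (E * X) F
  have h2 := Matrix.l2_opNorm_mul E X
  nlinarith [norm_nonneg X, norm_nonneg F, norm_nonneg (E * X), norm_nonneg E]

set_option maxHeartbeats 2000000 in
/-- Schur complement lemma: invertibility and norm estimates for a block matrix. -/
theorem schur_complement_inverse (m₁ m₂ : Type*) [Fintype m₁] [Fintype m₂]
    [DecidableEq m₁] [DecidableEq m₂]
    (A : Matrix m₁ m₁ ℂ) (B : Matrix m₁ m₂ ℂ)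
    (C : Matrix m₂ m₁ ℂ) (D : Matrix m₂ m₂ ℂ) (hA : IsUnit A)
    (hB : matrixL2OpNorm B ≤ 1) (hC : matrixL2OpNorm C ≤ 1) :
    (IsUnit (Matrix.fromBlocks A B C D) ↔ IsUnit (D - C * A⁻¹ * B)) ∧
      (IsUnit (D - C * A⁻¹ * B) →
        matrixL2OpNorm (D - C * A⁻¹ * B)⁻¹ ≤ matrixL2OpNorm (Matrix.fromBlocks A B C D)⁻¹ ∧
        matrixL2OpNorm (Matrix.fromBlocks A B C D)⁻¹ <
          4 * (1 + matrixL2OpNorm A⁻¹) ^ 2 * (1 + matrixL2OpNorm (D - C * A⁻¹ * B)⁻¹)) := by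
  classical
  simp only [matrixL2OpNorm_eq] at *
  letI : Invertible A := hA.invertible
  have hinvA : ⅟A = A⁻¹ := Matrix.invOf_eq_nonsing_inv A
  have hiff : IsUnit (Matrix.fromBlocks A B C D) ↔ IsUnit (D - C * A⁻¹ * B) := by
    rw [← hinvA]
    exact Matrix.isUnit_fromBlocks_iff_of_invertible₁₁
  refine ⟨hiff, fun hS => ?_⟩
  letI hS' : Invertible (D - C * ⅟A * B) := by rw [hinvA]; exact hS.invertible
  letI : Invertible (Matrix.fromBlocks A B C D) := Matrix.fromBlocks₁₁Invertible A B C D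
  have hinvS : ⅟(D - C * ⅟A * B) = (D - C * A⁻¹ * B)⁻¹ := by
    rw [Matrix.invOf_eq_nonsing_inv, hinvA]
  -- explicit inverse formula
  have hMinv : (Matrix.fromBlocks A B C D)⁻¹ =
      Matrix.fromBlocks
        (A⁻¹ + A⁻¹ * B * (D - C * A⁻¹ * B)⁻¹ * C * A⁻¹)
        (-(A⁻¹ * B * (D - C * A⁻¹ * B)⁻¹))
        (-((D - C * A⁻¹ * B)⁻¹ * C * A⁻¹))
        ((D - C * A⁻¹ * B)⁻¹) := by
    rw [← Matrix.invOf_eq_nonsing_inv, Matrix.invOf_fromBlocks₁₁_eq, hinvS, hinvA]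
  set S := D - C * A⁻¹ * B with hSdef
  -- injection matrices
  set U : Matrix (m₁ ⊕ m₂) m₁ ℂ := Matrix.fromRows 1 0 with hU
  set V : Matrix (m₁ ⊕ m₂) m₂ ℂ := Matrix.fromRows 0 1 with hV
  have hUH : Uᴴ = Matrix.fromCols 1 0 := by
    rw [hU, Matrix.conjTranspose_fromRows_eq_fromCols_conjTranspose,
      conjTranspose_one, conjTranspose_zero]
  have hVH : Vᴴ = Matrix.fromCols 0 1 := by
    rw [hV, Matrix.conjTranspose_fromRows_eq_fromCols_conjTranspose,
      conjTranspose_one, conjTranspose_zero]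
  have hUnorm : ‖U‖ ≤ 1 := by
    apply aux_norm_le_one_of_mul_self
    rw [hUH, hU, Matrix.fromCols_mul_fromRows]
    simp
  have hVnorm : ‖V‖ ≤ 1 := by
    apply aux_norm_le_one_of_mul_self
    rw [hVH, hV, Matrix.fromCols_mul_fromRows]
    simp
  have hUHnorm : ‖Uᴴ‖ ≤ 1 := by rw [Matrix.l2_opNorm_conjTranspose]; exact hUnorm
  have hVHnorm : ‖Vᴴ‖ ≤ 1 := by rw [Matrix.l2_opNorm_conjTranspose]; exact hVnorm
  -- extraction of the (2,2) block
  have hextract : ∀ (P : Matrix m₁ m₁ ℂ) (Q : Matrix m₁ m₂ ℂ) (R : Matrix m₂ m₁ ℂ)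
      (W : Matrix m₂ m₂ ℂ), Vᴴ * Matrix.fromBlocks P Q R W * V = W := by
    intro P Q R W
    rw [hVH, hV, Matrix.fromCols_mul_fromBlocks, Matrix.fromCols_mul_fromRows]
    simp
  -- decomposition of a block matrix
  have hdecomp : ∀ (P : Matrix m₁ m₁ ℂ) (Q : Matrix m₁ m₂ ℂ) (R : Matrix m₂ m₁ ℂ)
      (W : Matrix m₂ m₂ ℂ), Matrix.fromBlocks P Q R W =
        U * P * Uᴴ + U * Q * Vᴴ + V * R * Uᴴ + V * W * Vᴴ := by
    intro P Q R W
    rw [hUH, hVH, hU, hV]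
    simp only [Matrix.fromRows_mul, Matrix.one_mul, Matrix.zero_mul,
      Matrix.fromRows_mul_fromCols, Matrix.mul_one, Matrix.mul_zero,
      Matrix.fromBlocks_add]
    ext (i | i) (j | j) <;>
      simp [Matrix.fromRows_apply_inl, Matrix.fromRows_apply_inr,
        Matrix.fromCols_apply_inl, Matrix.fromCols_apply_inr]
  constructor
  · -- lower bound
    calc ‖S⁻¹‖ = ‖Vᴴ * (Matrix.fromBlocks A B C D)⁻¹ * V‖ := by
          rw [hMinv, hextract]
      _ ≤ ‖(Matrix.fromBlocks A B C D)⁻¹‖ := aux_sandwich _ _ _ hVHnorm hVnorm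
  · -- upper bound
    set a := ‖A⁻¹‖ with ha
    set s := ‖S⁻¹‖ with hs
    have h0a : (0:ℝ) ≤ a := norm_nonneg _
    have h0s : (0:ℝ) ≤ s := norm_nonneg _
    have hQ : ‖A⁻¹ * B * S⁻¹‖ ≤ a * s := by
      calc ‖A⁻¹ * B * S⁻¹‖ ≤ ‖A⁻¹ * B‖ * s := Matrix.l2_opNorm_mul _ _
        _ ≤ (a * ‖B‖) * s :=
          mul_le_mul_of_nonneg_right (Matrix.l2_opNorm_mul _ _) h0s
        _ ≤ (a * 1) * s := by
          have := mul_le_mul_of_nonneg_left hB h0a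
          nlinarith
        _ = a * s := by ring
    have hR : ‖S⁻¹ * C * A⁻¹‖ ≤ s * a := by
      calc ‖S⁻¹ * C * A⁻¹‖ ≤ ‖S⁻¹ * C‖ * a := Matrix.l2_opNorm_mul _ _
        _ ≤ (s * ‖C‖) * a :=
          mul_le_mul_of_nonneg_right (Matrix.l2_opNorm_mul _ _) h0a
        _ ≤ (s * 1) * a := by
          have := mul_le_mul_of_nonneg_left hC h0s
          nlinarith
        _ = s * a := by ring
    have hP2 : ‖A⁻¹ * B * S⁻¹ * C * A⁻¹‖ ≤ a * s * a := by
      calc ‖A⁻¹ * B * S⁻¹ * C * A⁻¹‖ ≤ ‖A⁻¹ * B * S⁻¹ * C‖ * a := Matrix.l2_opNorm_mul _ _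
        _ ≤ (‖A⁻¹ * B * S⁻¹‖ * ‖C‖) * a :=
          mul_le_mul_of_nonneg_right (Matrix.l2_opNorm_mul _ _) h0a
        _ ≤ ((a * s) * 1) * a := by
          have h1 : ‖A⁻¹ * B * S⁻¹‖ * ‖C‖ ≤ (a * s) * 1 := by
            have h2 := norm_nonneg (A⁻¹ * B * S⁻¹)
            have h3 := norm_nonneg C
            nlinarith
          exact mul_le_mul_of_nonneg_right h1 h0a
        _ = a * s * a := by ring
    have hmain : ‖(Matrix.fromBlocks A B C D)⁻¹‖ ≤
        (a + a * s * a) + a * s + s * a + s := by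
      rw [hMinv, hdecomp]
      have t1 : ‖U * (A⁻¹ + A⁻¹ * B * S⁻¹ * C * A⁻¹) * Uᴴ‖ ≤ a + a * s * a := by
        refine (aux_sandwich _ _ _ hUnorm hUHnorm).trans ?_
        refine (norm_add_le _ _).trans ?_
        exact add_le_add le_rfl hP2
      have t2 : ‖U * (-(A⁻¹ * B * S⁻¹)) * Vᴴ‖ ≤ a * s := by
        refine (aux_sandwich _ _ _ hUnorm hVHnorm).trans ?_
        rw [norm_neg]; exact hQ
      have t3 : ‖V * (-(S⁻¹ * C * A⁻¹)) * Uᴴ‖ ≤ s * a := by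
        refine (aux_sandwich _ _ _ hVnorm hUHnorm).trans ?_
        rw [norm_neg]; exact hR
      have t4 : ‖V * S⁻¹ * Vᴴ‖ ≤ s := aux_sandwich _ _ _ hVnorm hVHnorm
      calc ‖U * (A⁻¹ + A⁻¹ * B * S⁻¹ * C * A⁻¹) * Uᴴ + U * (-(A⁻¹ * B * S⁻¹)) * Vᴴ +
              V * (-(S⁻¹ * C * A⁻¹)) * Uᴴ + V * S⁻¹ * Vᴴ‖
          ≤ ‖U * (A⁻¹ + A⁻¹ * B * S⁻¹ * C * A⁻¹) * Uᴴ‖ + ‖U * (-(A⁻¹ * B * S⁻¹)) * Vᴴ‖ +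
              ‖V * (-(S⁻¹ * C * A⁻¹)) * Uᴴ‖ + ‖V * S⁻¹ * Vᴴ‖ := by
            exact le_trans (norm_add_le _ _) (add_le_add (le_trans (norm_add_le _ _)
              (add_le_add (norm_add_le _ _) le_rfl)) le_rfl)
        _ ≤ (a + a * s * a) + a * s + s * a + s := by
            exact add_le_add (add_le_add (add_le_add t1 t2) t3) t4
    nlinarith [hmain]
end

section
/- Let Λ ⊂ ℤ^d be finite and A, B complex matrices indexed by Λ with sup_{x∈Λ} Σ_{y∈Λ} |A(x,y)| ≤ M and sup_{x∈Λ} Σ_{y∈Λ} |B(x,y)| ≤ ε. Then |det(A + B) − det A| ≤ ε · (#Λ)² · (M + ε)^{#Λ − 1}. -/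
lemma abs_det_le_prod_rowsum {n : Type*} [Fintype n] [DecidableEq n] (D : Matrix n n ℂ) :
    ‖D.det‖ ≤ ∏ i, ∑ j, ‖D i j‖ := by
  rw [Matrix.det_apply]
  refine (norm_sum_le _ _).trans ?_
  have h1 : ∀ σ : Equiv.Perm n, ‖Equiv.Perm.sign σ • ∏ i, D (σ i) i‖
      = ∏ i, ‖D (σ i) i‖ := by
    intro σ
    rcases Int.units_eq_one_or (Equiv.Perm.sign σ) with h | h <;> simp [h, map_prod]
  rw [Finset.sum_congr rfl fun σ _ => h1 σ]
  have h2 : ∀ σ : Equiv.Perm n, ∏ i, ‖D (σ i) i‖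
      = ∏ i, ‖D i (σ.symm i)‖ := by
    intro σ
    rw [← Equiv.prod_comp σ.symm]
    simp
  rw [Finset.sum_congr rfl fun σ _ => h2 σ]
  rw [← Equiv.sum_comp (Equiv.inv (Equiv.Perm n))]
  simp only [Equiv.inv_apply]
  rw [Finset.prod_univ_sum]
  have h4 : ∀ x : Equiv.Perm n, ⇑(Equiv.symm x⁻¹) = ⇑x := fun x => rfl
  simp only [h4]
  have himg := Finset.sum_image (s := (Finset.univ : Finset (Equiv.Perm n)))
    (g := fun σ : Equiv.Perm n => ⇑σ)
    (f := fun f : n → n => ∏ i, ‖D i (f i)‖)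
    (fun a _ b _ h => Equiv.coe_fn_injective h)
  rw [← himg]
  apply Finset.sum_le_sum_of_subset_of_nonneg
  · intro f _; simp [Fintype.mem_piFinset]
  · intro f _ _
    exact Finset.prod_nonneg fun i _ => norm_nonneg _

/-- Perturbation bound for determinants. -/
theorem det_perturbation_bound (d : ℕ) (Λ : Finset (Fin d → ℤ))
    (A B : Matrix Λ Λ ℂ) (M ε : ℝ)
    (hA : ∀ x : Λ, ∑ y : Λ, ‖A x y‖ ≤ M)
    (hB : ∀ x : Λ, ∑ y : Λ, ‖B x y‖ ≤ ε) :
    ‖(A + B).det - A.det‖ ≤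
      ε * (Λ.card : ℝ) ^ 2 * (M + ε) ^ (Λ.card - 1) := by
  rcases Nat.eq_zero_or_pos Λ.card with hcard | hcard
  · -- empty case
    have hempty : IsEmpty Λ := by
      rw [Finset.card_eq_zero] at hcard
      subst hcard
      exact Finset.isEmpty_coe_sort.mpr rfl
    rw [Matrix.det_isEmpty, Matrix.det_isEmpty]
    simp [hcard]
  -- nonempty case
  obtain ⟨x₀, hx₀⟩ := Finset.card_pos.mp hcard
  have hM : 0 ≤ M := le_trans (Finset.sum_nonneg fun y _ => norm_nonneg _) (hA ⟨x₀, hx₀⟩)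
  have hε : 0 ≤ ε := le_trans (Finset.sum_nonneg fun y _ => norm_nonneg _) (hB ⟨x₀, hx₀⟩)
  set n := Λ.card with hn
  have hcardcoe : Fintype.card Λ = n := Fintype.card_coe Λ
  let e : Fin n ≃ Λ := (Fintype.equivFinOfCardEq hcardcoe).symm
  -- the interpolating matrices
  set C : ℕ → Matrix Λ Λ ℂ := fun k => Matrix.of fun i j =>
    if ((e.symm i : Fin n) : ℕ) < k then (A + B) i j else A i j with hC
  have hC0 : C 0 = A := by
    ext i j; simp [hC]
  have hCn : C n = A + B := by
    ext i j; simp [hC, (e.symm i).isLt]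
  -- the step matrices
  set D : ℕ → Matrix Λ Λ ℂ := fun k =>
    if hk : k < n then (C k).updateRow (e ⟨k, hk⟩) (B (e ⟨k, hk⟩)) else 0 with hD
  have hstep : ∀ k, k < n → (C (k + 1)).det - (C k).det = (D k).det := by
    intro k hk
    have h1 : C (k + 1) = (C k).updateRow (e ⟨k, hk⟩) (A (e ⟨k, hk⟩) + B (e ⟨k, hk⟩)) := by
      ext i j
      by_cases hi : i = e ⟨k, hk⟩
      · subst hi
        simp [hC, Matrix.updateRow_self, Nat.lt_succ_iff, Matrix.add_apply]
      · have hne : ((e.symm i : Fin n) : ℕ) ≠ k := by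
          intro h
          apply hi
          have : e.symm i = ⟨k, hk⟩ := Fin.ext h
          rw [← this]; simp
        rw [Matrix.updateRow_ne hi]
        simp only [hC, Matrix.of_apply]
        congr 1
        simp [Nat.lt_succ_iff_lt_or_eq, hne]
        exact ⟨fun h => lt_of_le_of_ne h hne, le_of_lt⟩
    have h2 : (C k).updateRow (e ⟨k, hk⟩) (A (e ⟨k, hk⟩)) = C k := by
      ext i j
      by_cases hi : i = e ⟨k, hk⟩
      · subst hi
        simp [hC, Matrix.updateRow_self]
      · rw [Matrix.updateRow_ne hi]
    rw [h1, Matrix.det_updateRow_add, h2, hD]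
    simp [hk]
  -- telescoping
  have htel : (A + B).det - A.det = ∑ k ∈ Finset.range n, (D k).det := by
    rw [← hCn, ← hC0, ← Finset.sum_range_sub (fun k => (C k).det)]
    exact (Finset.sum_congr rfl fun k hk => (hstep k (Finset.mem_range.mp hk)).symm).symm
  -- row sum bounds for C k
  have hrowC : ∀ k (i : Λ), ∑ j, ‖C k i j‖ ≤ M + ε := by
    intro k i
    by_cases h : ((e.symm i : Fin n) : ℕ) < k
    · calc ∑ j, ‖C k i j‖ = ∑ j, ‖A i j + B i j‖ := by
            simp [hC, h, Matrix.add_apply]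
        _ ≤ ∑ j, (‖A i j‖ + ‖B i j‖) :=
            Finset.sum_le_sum fun j _ => norm_add_le _ _
        _ = (∑ j, ‖A i j‖) + ∑ j, ‖B i j‖ := Finset.sum_add_distrib
        _ ≤ M + ε := add_le_add (hA i) (hB i)
    · calc ∑ j, ‖C k i j‖ = ∑ j, ‖A i j‖ := by simp [hC, h]
        _ ≤ M := hA i
        _ ≤ M + ε := le_add_of_nonneg_right hε
  -- bound each |det (D k)|
  have hDk : ∀ k, k < n → ‖(D k).det‖ ≤ ε * (M + ε) ^ (n - 1) := by
    intro k hk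
    refine (abs_det_le_prod_rowsum (D k)).trans ?_
    have hmem : (e ⟨k, hk⟩ : Λ) ∈ (Finset.univ : Finset Λ) := Finset.mem_univ _
    rw [← Finset.mul_prod_erase Finset.univ _ hmem]
    have hrow1 : ∑ j, ‖D k (e ⟨k, hk⟩) j‖ ≤ ε := by
      simp only [hD, dif_pos hk, Matrix.updateRow_self]
      exact hB _
    have hrow2 : ∀ i ∈ Finset.univ.erase (e ⟨k, hk⟩),
        ∑ j, ‖D k i j‖ ≤ M + ε := by
      intro i hi
      have hne : i ≠ e ⟨k, hk⟩ := (Finset.mem_erase.mp hi).1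
      simp only [hD, dif_pos hk, Matrix.updateRow_ne hne]
      exact hrowC k i
    calc (∑ j, ‖D k (e ⟨k, hk⟩) j‖) *
          ∏ i ∈ Finset.univ.erase (e ⟨k, hk⟩), ∑ j, ‖D k i j‖
        ≤ ε * ∏ i ∈ Finset.univ.erase (e ⟨k, hk⟩), (M + ε) := by
          apply mul_le_mul hrow1
          · exact Finset.prod_le_prod (fun i _ => Finset.sum_nonneg fun j _ =>
              norm_nonneg _) hrow2
          · exact Finset.prod_nonneg fun i _ => Finset.sum_nonneg fun j _ =>
              norm_nonneg _
          · exact hε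
      _ = ε * (M + ε) ^ (n - 1) := by
          rw [Finset.prod_const, Finset.card_erase_of_mem hmem, Finset.card_univ, hcardcoe]
  -- put it together
  rw [htel]
  calc ‖∑ k ∈ Finset.range n, (D k).det‖
      ≤ ∑ k ∈ Finset.range n, ‖(D k).det‖ := norm_sum_le _ _
    _ ≤ ∑ k ∈ Finset.range n, ε * (M + ε) ^ (n - 1) :=
        Finset.sum_le_sum fun k hk => hDk k (Finset.mem_range.mp hk)
    _ = n * (ε * (M + ε) ^ (n - 1)) := by rw [Finset.sum_const, Finset.card_range]; ring
    _ ≤ ε * (n : ℝ) ^ 2 * (M + ε) ^ (n - 1) := by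
        have h1 : (n : ℝ) ≤ (n : ℝ) ^ 2 := by
          have : (1 : ℝ) ≤ n := by exact_mod_cast hcard
          nlinarith
        have h2 : (0 : ℝ) ≤ (M + ε) ^ (n - 1) := pow_nonneg (by linarith) _
        nlinarith [mul_nonneg hε h2]
end

section
/- Let α > 0, ρ > 1, and let W: ℤ^d × ℤ^d → ℂ satisfy |W(x,y)| ≤ e^{−α log^ρ(1+‖x−y‖)}. Then for any finite Λ ⊂ ℤ^d, any i ≥ 2, and any x, y ∈ Λ, the i-th matrix power satisfies |W_Λ^i(x,y)| ≤ D(α/4)^{i−1} · e^{−(3/4)α log^ρ(1+‖x−y‖) + (3/4)α C(ρ) log^ρ i}, where D(α/4) = Σ_{k∈ℤ^d} e^{−(α/4) log^ρ(1+‖k‖)} and C(ρ) is the quasi-metric constant. -/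
namespace HoppingAux

lemma summable_g : Summable (fun m : ℤ => ((1 + |(m : ℝ)|) ^ 2)⁻¹) := by
  have hnat : Summable (fun n : ℕ => ((1 + (n : ℝ)) ^ 2)⁻¹) := by
    have h2 : Summable (fun n : ℕ => 1 / (n : ℝ) ^ 2) :=
      Real.summable_one_div_nat_pow.mpr one_lt_two
    have := (summable_nat_add_iff 1).mpr h2
    refine this.congr fun n => ?_
    push_cast; rw [one_div]; ring_nf
  refine Summable.of_nat_of_neg (hnat.congr fun n => by rw [Int.cast_natCast, Nat.abs_cast]) ?_
  refine hnat.congr fun n => ?_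
  push_cast
  rw [abs_neg, abs_of_nonneg (by positivity)]

lemma aux_summable (d : ℕ) (c ρ : ℝ) (hc : 0 < c) (hρ : 1 < ρ) :
    Summable (fun k : Fin d → ℤ => Real.exp (-c * Real.log (1 + ‖k‖) ^ ρ)) := by
  have hpi : ∀ n : ℕ, Summable (fun k : Fin n → ℤ => ∏ j, ((1 + |(k j : ℝ)|) ^ 2)⁻¹) := by
    intro n
    induction n with
    | zero => exact .of_finite
    | succ n ih =>
        have hmul := Summable.mul_of_nonneg summable_g ih
          (fun m => by positivity) (fun k => by positivity)
        have := ((Fin.consEquiv fun _ : Fin (n + 1) => ℤ).symm.summable_iff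
          (f := fun p : ℤ × (Fin n → ℤ) =>
            ((1 + |(p.1 : ℝ)|) ^ 2)⁻¹ * ∏ j, ((1 + |(p.2 j : ℝ)|) ^ 2)⁻¹)).mpr hmul
        refine this.congr fun k => ?_
        simp only [Function.comp, Fin.consEquiv_symm_apply]
        rw [Fin.prod_univ_succ]
        rfl
  set B : ℝ := (2 * d / c) ^ (1 / (ρ - 1)) with hB
  have hρ0 : (0:ℝ) < ρ := lt_trans one_pos hρ
  have hρ1 : ρ - 1 ≠ 0 := sub_ne_zero.mpr (ne_of_gt hρ)
  have hBnn : 0 ≤ B := Real.rpow_nonneg (by positivity) _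
  have key : ∀ u : ℝ, 0 ≤ u → 2 * d * u - c * u ^ ρ ≤ 2 * d * B := by
    intro u hu
    rcases le_or_gt u B with h | h
    · have : 0 ≤ c * u ^ ρ := by positivity
      nlinarith [Nat.cast_nonneg (α := ℝ) d]
    · have hu0 : 0 < u := lt_of_le_of_lt hBnn h
      have hBpow : B ^ (ρ - 1) = 2 * d / c := by
        rw [hB, ← Real.rpow_mul (by positivity), one_div_mul_cancel hρ1, Real.rpow_one]
      have hup : (2 : ℝ) * d / c ≤ u ^ (ρ - 1) := by
        rw [← hBpow]
        exact Real.rpow_le_rpow hBnn h.le (by linarith)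
      have hsplit : u ^ ρ = u ^ (ρ - 1) * u := by
        rw [← Real.rpow_add_one (ne_of_gt hu0), sub_add_cancel]
      have : 2 * d * u ≤ c * u ^ ρ := by
        rw [hsplit, ← mul_assoc]
        have := mul_le_mul_of_nonneg_right (mul_le_mul_of_nonneg_left hup hc.le) hu
        calc 2 * (d:ℝ) * u = c * (2 * d / c) * u := by field_simp
        _ ≤ c * u ^ (ρ - 1) * u := this
      have : 2 * d * u - c * u ^ ρ ≤ 0 := by linarith
      have hM : (0:ℝ) ≤ 2 * d * B := by positivity
      linarith
  refine Summable.of_nonneg_of_le (fun k => (Real.exp_pos _).le)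
    (fun k => ?_) (((hpi d).mul_left (Real.exp (2 * d * B))))
  -- bound: exp(-c log(1+‖k‖)^ρ) ≤ exp(2dB) * ∏ ((1+|k j|)^2)⁻¹
  set u : ℝ := Real.log (1 + ‖k‖) with hu
  have hk : (0:ℝ) ≤ ‖k‖ := norm_nonneg _
  have hun : 0 ≤ u := Real.log_nonneg (by linarith)
  have h1k : (0:ℝ) < 1 + ‖k‖ := by linarith
  have hprod : (1 + ‖k‖) ^ d ≥ ∏ j, (1 + |(k j : ℝ)|) := by
    calc ∏ j, (1 + |(k j : ℝ)|) ≤ ∏ j : Fin d, (1 + ‖k‖) := by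
          refine Finset.prod_le_prod (fun j _ => by positivity) fun j _ => ?_
          have : |(k j : ℝ)| = ‖k j‖ := (Int.norm_cast_real (k j)).symm ▸ rfl
          have hle : ‖k j‖ ≤ ‖k‖ := norm_le_pi_norm k j
          rw [this] at *
          linarith
    _ = (1 + ‖k‖) ^ d := by rw [Finset.prod_const, Finset.card_univ, Fintype.card_fin]
  have hexp : Real.exp u = 1 + ‖k‖ := Real.exp_log h1k
  have hineq : Real.exp (-c * u ^ ρ) ≤ Real.exp (2 * d * B) * ((1 + ‖k‖) ^ d) ^ (-2 : ℤ) := by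
    rw [← Real.exp_log (x := ((1 + ‖k‖) ^ d) ^ (-2 : ℤ)) (by positivity), ← Real.exp_add,
      Real.exp_le_exp]
    have hlog : Real.log (((1 + ‖k‖) ^ d) ^ (-2 : ℤ)) = -2 * (d * u) := by
      rw [Real.log_zpow, Real.log_pow, hu]
      push_cast; ring
    rw [hlog]
    have := key u hun
    nlinarith
  have hinv : ((1 + ‖k‖) ^ d) ^ (-2 : ℤ) ≤ ∏ j, ((1 + |(k j : ℝ)|) ^ 2)⁻¹ := by
    have hp : (0:ℝ) < ∏ j, (1 + |(k j : ℝ)|) :=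
      Finset.prod_pos fun j _ => by positivity
    calc ((1 + ‖k‖) ^ d) ^ (-2 : ℤ) = (((1 + ‖k‖) ^ d) ^ 2)⁻¹ := by
          rw [zpow_neg, zpow_two, sq]
    _ ≤ ((∏ j, (1 + |(k j : ℝ)|)) ^ 2)⁻¹ := by
          apply inv_anti₀ (by positivity)
          exact pow_le_pow_left₀ hp.le hprod 2
    _ = ∏ j, ((1 + |(k j : ℝ)|) ^ 2)⁻¹ := by
          rw [← Finset.prod_pow, ← Finset.prod_inv_distrib]
  calc Real.exp (-c * u ^ ρ) ≤ Real.exp (2 * d * B) * ((1 + ‖k‖) ^ d) ^ (-2 : ℤ) := hineq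
  _ ≤ Real.exp (2 * d * B) * ∏ j, ((1 + |(k j : ℝ)|) ^ 2)⁻¹ :=
      mul_le_mul_of_nonneg_left hinv (Real.exp_pos _).le

end HoppingAux

namespace HoppingAux

variable {d : ℕ}

/-- Hop distances along the path x, z 0, ..., z (n-1), y. -/
def dists : ∀ n : ℕ, (Fin d → ℤ) → (Fin n → (Fin d → ℤ)) → (Fin d → ℤ) → Fin (n + 1) → ℝ
  | 0, x, _, y => fun _ => ‖x - y‖
  | n + 1, x, z, y => Fin.cons ‖x - z 0‖ (dists n (z 0) (Fin.tail z) y)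

lemma dists_nonneg : ∀ (n : ℕ) (x : Fin d → ℤ) z y j, 0 ≤ dists n x z y j
  | 0, x, z, y, j => norm_nonneg _
  | n + 1, x, z, y, j => by
      refine Fin.cases ?_ (fun j => ?_) j
      · simpa [dists] using norm_nonneg _
      · simpa [dists] using dists_nonneg n (z 0) (Fin.tail z) y j

lemma norm_le_sum_dists : ∀ (n : ℕ) (x : Fin d → ℤ) z y, ‖x - y‖ ≤ ∑ j, dists n x z y j
  | 0, x, z, y => by simp [dists]
  | n + 1, x, z, y => by
      rw [show dists (n+1) x z y = Fin.cons ‖x - z 0‖ (dists n (z 0) (Fin.tail z) y) from rfl,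
        Fin.sum_cons]
      have h1 : ‖x - y‖ ≤ ‖x - z 0‖ + ‖z 0 - y‖ := by
        calc ‖x - y‖ = ‖(x - z 0) + (z 0 - y)‖ := by rw [sub_add_sub_cancel]
        _ ≤ ‖x - z 0‖ + ‖z 0 - y‖ := norm_add_le _ _
      have h2 := norm_le_sum_dists n (z 0) (Fin.tail z) y
      linarith

/-- Weight of a path with decay rate c. -/
noncomputable def weight (c ρ : ℝ) (n : ℕ) (x : Fin d → ℤ) (z : Fin n → (Fin d → ℤ)) (y : Fin d → ℤ) : ℝ :=
  ∏ j, Real.exp (-c * Real.log (1 + dists n x z y j) ^ ρ)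

lemma weight_nonneg (c ρ : ℝ) (n : ℕ) (x : Fin d → ℤ) (z) (y) : 0 ≤ weight c ρ n x z y :=
  Finset.prod_nonneg fun j _ => (Real.exp_pos _).le

lemma weight_succ (c ρ : ℝ) (n : ℕ) (x : Fin d → ℤ) (z : Fin (n+1) → (Fin d → ℤ)) (y) :
    weight c ρ (n+1) x z y
      = Real.exp (-c * Real.log (1 + ‖x - z 0‖) ^ ρ) * weight c ρ n (z 0) (Fin.tail z) y := by
  unfold weight
  rw [show dists (n+1) x z y = Fin.cons ‖x - z 0‖ (dists n (z 0) (Fin.tail z) y) from rfl]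
  rw [Fin.prod_univ_succ]
  simp [Fin.cons_zero, Fin.cons_succ]

end HoppingAux

namespace HoppingAux2
open HoppingAux

variable {d : ℕ}

lemma log_rpow_mono {ρ : ℝ} (hρ : 1 < ρ) {u v : ℝ} (hu : 0 ≤ u) (huv : u ≤ v) :
    Real.log (1 + u) ^ ρ ≤ Real.log (1 + v) ^ ρ :=
  Real.rpow_le_rpow (Real.log_nonneg (by linarith))
    (Real.log_le_log (by linarith) (by linarith)) (by linarith)

/-- Split each factor and bound the 3/4-part by the endpoint distance. -/
lemma weight_split (α ρ Cρ : ℝ) (hα : 0 < α) (hρ : 1 < ρ)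
    (hC : ∀ (n : ℕ) (t : Fin n → ℝ), (∀ j, 0 ≤ t j) →
      Real.log (1 + ∑ j, t j) ^ ρ ≤ (∑ j, Real.log (1 + t j) ^ ρ) + Cρ * Real.log n ^ ρ)
    (n : ℕ) (x : Fin d → ℤ) (z : Fin n → (Fin d → ℤ)) (y : Fin d → ℤ) :
    weight α ρ n x z y ≤ weight (α/4) ρ n x z y *
      Real.exp (-(3/4) * α * Real.log (1 + ‖x - y‖) ^ ρ
        + (3/4) * α * Cρ * Real.log (n+1 : ℕ) ^ ρ) := by
  set L : Fin (n+1) → ℝ := fun j => Real.log (1 + dists n x z y j) ^ ρ with hL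
  have hLnn : ∀ j, 0 ≤ L j := fun j =>
    Real.rpow_nonneg (Real.log_nonneg (by linarith [dists_nonneg n x z y j])) _
  have hsplit : weight α ρ n x z y
      = weight (α/4) ρ n x z y * Real.exp (-(3/4) * α * ∑ j, L j) := by
    unfold weight
    rw [← Real.exp_sum, ← Real.exp_sum, ← Real.exp_add, Real.exp_eq_exp]
    rw [Finset.mul_sum, ← Finset.sum_add_distrib]
    exact Finset.sum_congr rfl fun j _ => by rw [hL]; ring
  rw [hsplit]
  refine mul_le_mul_of_nonneg_left ?_ (weight_nonneg _ _ _ _ _ _)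
  rw [Real.exp_le_exp]
  have h1 : Real.log (1 + ‖x - y‖) ^ ρ ≤ (∑ j, L j) + Cρ * Real.log (n+1 : ℕ) ^ ρ := by
    have h2 := hC (n+1) (dists n x z y) (dists_nonneg n x z y)
    have h3 : Real.log (1 + ‖x - y‖) ^ ρ ≤ Real.log (1 + ∑ j, dists n x z y j) ^ ρ :=
      log_rpow_mono hρ (norm_nonneg _) (norm_le_sum_dists n x z y)
    calc Real.log (1 + ‖x - y‖) ^ ρ ≤ Real.log (1 + ∑ j, dists n x z y j) ^ ρ := h3
    _ ≤ (∑ j, Real.log (1 + dists n x z y j) ^ ρ) + Cρ * Real.log (n+1 : ℕ) ^ ρ := h2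
    _ = (∑ j, L j) + Cρ * Real.log (n+1 : ℕ) ^ ρ := rfl
  nlinarith [h1]

end HoppingAux2

namespace HoppingAux
variable {d : ℕ}

lemma sum_shift_le (c ρ : ℝ) (hc : 0 < c) (hρ : 1 < ρ) (Λ : Finset (Fin d → ℤ))
    (x : Fin d → ℤ) :
    ∑ a : Λ, Real.exp (-c * Real.log (1 + ‖x - (a : Fin d → ℤ)‖) ^ ρ)
      ≤ ∑' k : Fin d → ℤ, Real.exp (-c * Real.log (1 + ‖k‖) ^ ρ) := by
  have hs := aux_summable d c ρ hc hρ
  have hs2 : Summable (fun k : Fin d → ℤ => Real.exp (-c * Real.log (1 + ‖x - k‖) ^ ρ)) :=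
    (Equiv.summable_iff (Equiv.subLeft x)).mpr hs
  calc ∑ a : Λ, Real.exp (-c * Real.log (1 + ‖x - (a : Fin d → ℤ)‖) ^ ρ)
      = ∑ a ∈ Λ, Real.exp (-c * Real.log (1 + ‖x - a‖) ^ ρ) := Finset.sum_coe_sort Λ (fun a => Real.exp (-c * Real.log (1 + ‖x - a‖) ^ ρ))
    _ ≤ ∑' k : Fin d → ℤ, Real.exp (-c * Real.log (1 + ‖x - k‖) ^ ρ) :=
        Summable.sum_le_tsum Λ (fun k _ => (Real.exp_pos _).le) hs2
    _ = ∑' k : Fin d → ℤ, Real.exp (-c * Real.log (1 + ‖k‖) ^ ρ) :=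
        Equiv.tsum_eq (Equiv.subLeft x) (fun k => Real.exp (-c * Real.log (1 + ‖k‖) ^ ρ))

lemma one_le_D (c ρ : ℝ) (hc : 0 < c) (hρ : 1 < ρ) :
    (1 : ℝ) ≤ ∑' k : Fin d → ℤ, Real.exp (-c * Real.log (1 + ‖k‖) ^ ρ) := by
  have hs := aux_summable d c ρ hc hρ
  have h0 : Real.exp (-c * Real.log (1 + ‖(0 : Fin d → ℤ)‖) ^ ρ) = 1 := by
    rw [norm_zero, add_zero, Real.log_one, Real.zero_rpow (by linarith), mul_zero, Real.exp_zero]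
  calc (1 : ℝ) = Real.exp (-c * Real.log (1 + ‖(0 : Fin d → ℤ)‖) ^ ρ) := h0.symm
    _ ≤ _ := Summable.le_tsum hs 0 fun k _ => (Real.exp_pos _).le

lemma sum_cons_eq {Λ : Finset (Fin d → ℤ)} {n : ℕ} (f : (Fin (n + 1) → Λ) → ℝ) :
    ∑ z : Fin (n + 1) → Λ, f z = ∑ a : Λ, ∑ z' : Fin n → Λ, f (Fin.cons a z') := by
  rw [← Equiv.sum_comp (Fin.consEquiv fun _ : Fin (n + 1) => (Λ : Type _)) f,
    Fintype.sum_prod_type]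
  rfl

lemma coe_cons_eq {Λ : Finset (Fin d → ℤ)} {n : ℕ} (a : Λ) (z' : Fin n → Λ) :
    (fun j => ((Fin.cons a z' : Fin (n + 1) → Λ) j : Fin d → ℤ))
      = Fin.cons (a : Fin d → ℤ) (fun j => ((z' j : Fin d → ℤ))) := by
  funext j
  refine Fin.cases ?_ (fun j => ?_) j <;> simp [Fin.cons_zero, Fin.cons_succ]

lemma sum_weight_le (c ρ : ℝ) (hc : 0 < c) (hρ : 1 < ρ) (Λ : Finset (Fin d → ℤ)) :
    ∀ (n : ℕ) (x y : Fin d → ℤ),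
      ∑ z : Fin n → Λ, weight c ρ n x (fun j => ((z j : Fin d → ℤ))) y
        ≤ (∑' k : Fin d → ℤ, Real.exp (-c * Real.log (1 + ‖k‖) ^ ρ)) ^ n := by
  intro n
  induction n with
  | zero =>
      intro x y
      have h1 : ∀ z : Fin 0 → Λ, weight c ρ 0 x (fun j => ((z j : Fin d → ℤ))) y
          = Real.exp (-c * Real.log (1 + ‖x - y‖) ^ ρ) := by
        intro z; unfold weight; rw [Fin.prod_univ_one]; rfl
      rw [Finset.sum_congr rfl fun z _ => h1 z, Finset.sum_const, pow_zero]
      have hcard : (Finset.univ : Finset (Fin 0 → Λ)).card = 1 := by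
        simp [Finset.card_univ]
      rw [hcard, one_smul]
      have hexp : Real.exp (-c * Real.log (1 + ‖x - y‖) ^ ρ) ≤ 1 := by
        rw [Real.exp_le_one_iff]
        have : 0 ≤ Real.log (1 + ‖x - y‖) ^ ρ :=
          Real.rpow_nonneg (Real.log_nonneg (by linarith [norm_nonneg (x - y)])) _
        nlinarith
      exact hexp
  | succ n ih =>
      intro x y
      set D := ∑' k : Fin d → ℤ, Real.exp (-c * Real.log (1 + ‖k‖) ^ ρ) with hD
      rw [sum_cons_eq]
      have step : ∀ a : Λ, ∑ z' : Fin n → Λ,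
          weight c ρ (n+1) x (fun j => ((Fin.cons a z' : Fin (n+1) → Λ) j : Fin d → ℤ)) y
          ≤ Real.exp (-c * Real.log (1 + ‖x - (a : Fin d → ℤ)‖) ^ ρ) * D ^ n := by
        intro a
        have : ∀ z' : Fin n → Λ,
            weight c ρ (n+1) x (fun j => ((Fin.cons a z' : Fin (n+1) → Λ) j : Fin d → ℤ)) y
            = Real.exp (-c * Real.log (1 + ‖x - (a : Fin d → ℤ)‖) ^ ρ)
              * weight c ρ n (a : Fin d → ℤ) (fun j => ((z' j : Fin d → ℤ))) y := by
          intro z'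
          rw [coe_cons_eq, weight_succ]
          simp [Fin.cons_zero, Fin.tail_cons]
        rw [Finset.sum_congr rfl fun z' _ => this z', ← Finset.mul_sum]
        exact mul_le_mul_of_nonneg_left (ih (a : Fin d → ℤ) y) (Real.exp_pos _).le
      calc ∑ a : Λ, ∑ z' : Fin n → Λ,
            weight c ρ (n+1) x (fun j => ((Fin.cons a z' : Fin (n+1) → Λ) j : Fin d → ℤ)) y
          ≤ ∑ a : Λ, Real.exp (-c * Real.log (1 + ‖x - (a : Fin d → ℤ)‖) ^ ρ) * D ^ n :=
            Finset.sum_le_sum fun a _ => step a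
        _ = (∑ a : Λ, Real.exp (-c * Real.log (1 + ‖x - (a : Fin d → ℤ)‖) ^ ρ)) * D ^ n := by
            rw [Finset.sum_mul]
        _ ≤ D * D ^ n := by
            refine mul_le_mul_of_nonneg_right (sum_shift_le c ρ hc hρ Λ x) ?_
            exact pow_nonneg (le_trans zero_le_one (one_le_D c ρ hc hρ)) n
        _ = D ^ (n + 1) := (pow_succ' D n).symm

end HoppingAux

namespace HoppingAux
variable {d : ℕ}

lemma sum_weight_succ (c ρ : ℝ) (Λ : Finset (Fin d → ℤ)) (n : ℕ) (x y : Fin d → ℤ) :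
    ∑ z : Fin (n + 1) → Λ, weight c ρ (n + 1) x (fun j => ((z j : Fin d → ℤ))) y
      = ∑ a : Λ, Real.exp (-c * Real.log (1 + ‖x - (a : Fin d → ℤ)‖) ^ ρ)
          * ∑ z' : Fin n → Λ, weight c ρ n (a : Fin d → ℤ) (fun j => ((z' j : Fin d → ℤ))) y := by
  rw [sum_cons_eq]
  refine Finset.sum_congr rfl fun a _ => ?_
  rw [Finset.mul_sum]
  refine Finset.sum_congr rfl fun z' _ => ?_
  rw [coe_cons_eq, weight_succ]
  simp [Fin.cons_zero, Fin.tail_cons]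

lemma pow_bound (α ρ : ℝ) (W : (Fin d → ℤ) → (Fin d → ℤ) → ℂ)
    (hW : ∀ x y, ‖W x y‖ ≤ Real.exp (-α * Real.log (1 + ‖x - y‖) ^ ρ))
    (Λ : Finset (Fin d → ℤ)) :
    ∀ (n : ℕ) (x y : Λ),
      ‖((Matrix.of fun a b : Λ => W a b) ^ (n + 1)) x y‖
        ≤ ∑ z : Fin n → Λ, weight α ρ n x (fun j => ((z j : Fin d → ℤ))) y := by
  intro n
  induction n with
  | zero =>
      intro x y
      have h1 : ∀ z : Fin 0 → Λ, weight α ρ 0 (↑x) (fun j => ((z j : Fin d → ℤ))) ↑y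
          = Real.exp (-α * Real.log (1 + ‖(↑x : Fin d → ℤ) - ↑y‖) ^ ρ) := by
        intro z; unfold weight; rw [Fin.prod_univ_one]; rfl
      rw [Finset.sum_congr rfl fun z _ => h1 z, Finset.sum_const]
      have hcard : (Finset.univ : Finset (Fin 0 → Λ)).card = 1 := by simp [Finset.card_univ]
      rw [hcard, one_smul, pow_one]
      simpa using hW ↑x ↑y
  | succ n ih =>
      intro x y
      rw [pow_succ', Matrix.mul_apply, sum_weight_succ]
      calc ‖∑ a : Λ, (Matrix.of fun a b : Λ => W a b) x a
              * ((Matrix.of fun a b : Λ => W a b) ^ (n + 1)) a y‖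
          ≤ ∑ a : Λ, ‖(Matrix.of fun a b : Λ => W a b) x a
              * ((Matrix.of fun a b : Λ => W a b) ^ (n + 1)) a y‖ :=
            norm_sum_le _ _
        _ ≤ ∑ a : Λ, Real.exp (-α * Real.log (1 + ‖(↑x : Fin d → ℤ) - ↑a‖) ^ ρ)
              * ∑ z' : Fin n → Λ, weight α ρ n (a : Fin d → ℤ) (fun j => ((z' j : Fin d → ℤ))) ↑y := by
            refine Finset.sum_le_sum fun a _ => ?_
            rw [norm_mul]
            refine mul_le_mul ?_ (ih a y) (norm_nonneg _) (Real.exp_pos _).le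
            simpa using hW ↑x ↑a

end HoppingAux

/-- Bound on matrix powers of a long-range hopping matrix. -/
theorem hopping_power_bound (d : ℕ) (α ρ Cρ : ℝ) (hα : 0 < α) (hρ : 1 < ρ)
    (hC : ∀ (n : ℕ) (t : Fin n → ℝ), (∀ j, 0 ≤ t j) →
      Real.log (1 + ∑ j, t j) ^ ρ ≤ (∑ j, Real.log (1 + t j) ^ ρ) + Cρ * Real.log n ^ ρ)
    (W : (Fin d → ℤ) → (Fin d → ℤ) → ℂ)
    (hW : ∀ x y, ‖W x y‖ ≤ Real.exp (-α * Real.log (1 + ‖x - y‖) ^ ρ))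
    (Λ : Finset (Fin d → ℤ)) (i : ℕ) (hi : 2 ≤ i) (x y : Λ) :
    ‖((Matrix.of fun a b : Λ => W a b) ^ i) x y‖ ≤
      (∑' k : Fin d → ℤ, Real.exp (-(α / 4) * Real.log (1 + ‖k‖) ^ ρ)) ^ (i - 1) *
        Real.exp (-(3 / 4) * α * Real.log (1 + ‖(x : Fin d → ℤ) - (y : Fin d → ℤ)‖) ^ ρ
          + (3 / 4) * α * Cρ * Real.log i ^ ρ) := by
  open HoppingAux HoppingAux2 in
  set n : ℕ := i - 1 with hn
  have hin : i = n + 1 := by omega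
  set D : ℝ := ∑' k : Fin d → ℤ, Real.exp (-(α / 4) * Real.log (1 + ‖k‖) ^ ρ) with hD
  set E : ℝ := Real.exp (-(3 / 4) * α * Real.log (1 + ‖(x : Fin d → ℤ) - (y : Fin d → ℤ)‖) ^ ρ
      + (3 / 4) * α * Cρ * Real.log (n + 1 : ℕ) ^ ρ) with hE
  have hmain : ‖((Matrix.of fun a b : Λ => W a b) ^ i) x y‖ ≤ D ^ n * E := by
    rw [hin]
    calc ‖((Matrix.of fun a b : Λ => W a b) ^ (n + 1)) x y‖
        ≤ ∑ z : Fin n → Λ, weight α ρ n x (fun j => ((z j : Fin d → ℤ))) y :=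
          pow_bound α ρ W hW Λ n x y
      _ ≤ ∑ z : Fin n → Λ, weight (α / 4) ρ n x (fun j => ((z j : Fin d → ℤ))) y * E :=
          Finset.sum_le_sum fun z _ => weight_split α ρ Cρ hα hρ hC n _ _ _
      _ = (∑ z : Fin n → Λ, weight (α / 4) ρ n x (fun j => ((z j : Fin d → ℤ))) y) * E :=
          (Finset.sum_mul _ _ _).symm
      _ ≤ D ^ n * E := by
          refine mul_le_mul_of_nonneg_right ?_ (Real.exp_pos _).le
          exact sum_weight_le (α / 4) ρ (by linarith) hρ Λ n x y
  have hEeq : E = Real.exp (-(3 / 4) * α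
      * Real.log (1 + ‖(x : Fin d → ℤ) - (y : Fin d → ℤ)‖) ^ ρ
      + (3 / 4) * α * Cρ * Real.log i ^ ρ) := by
    rw [hE, hin]
  rw [hEeq] at hmain
  exact hmain
end
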